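/- Let u : ℝ → ℝ be continuous, even, nonnegative with compact support and unit integral, d ≥ 2, and F = I_d[abs * u]. Then F(s) = C_d |s| + O(1/s) as s → ∞, where C_d = Γ(d/2)/(√π Γ((d+1)/2)); in particular F − C_d·abs ∈ C₀(ℝ) ∩ L²(ℝ). -/

import Mathlib

open MeasureTheory Filter

/-- Surface area of the unit sphere `S^k ⊆ ℝ^(k+1)`. -/
noncomputable def sphArea (k : ℕ) : ℝ :=
  2 * Real.pi ^ (((k : ℝ) + 1) / 2) / Real.Gamma (((k : ℝ) + 1) / 2)

/-- The Riemann--Liouville fractional integral operator `I_d`. -/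
noncomputable def RL (d : ℕ) (f : ℝ → ℝ) (s : ℝ) : ℝ :=
  (2 * sphArea (d - 2) / sphArea (d - 1)) *
    ∫ t in (0:ℝ)..1, f (t * s) * (1 - t ^ 2) ^ (((d : ℝ) - 3) / 2)

section Aux

open Set intervalIntegral

/-- Measurability of the weight. -/
lemma w_meas (α : ℝ) : Measurable (fun t : ℝ => (1 - t ^ 2) ^ α) := by fun_prop

/-- Integrability of the weight `(1-t²)^α` on `[0,1]` for `α > -1`. -/
lemma w_intInt {α : ℝ} (hα : -1 < α) :
    IntervalIntegrable (fun t : ℝ => (1 - t ^ 2) ^ α) volume 0 1 := by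
  rw [intervalIntegrable_iff_integrableOn_Ioc_of_le zero_le_one]
  have h1 : IntervalIntegrable (fun t : ℝ => (1 - t) ^ α) volume 0 1 := by
    have := ((intervalIntegrable_rpow' (a := 0) (b := 1) hα).comp_sub_left 1).symm
    norm_num at this
    exact this
  have h1' : IntegrableOn (fun t : ℝ => ((2:ℝ) ^ α + 1) * (1 - t) ^ α) (Ioc 0 1) volume := by
    rw [intervalIntegrable_iff_integrableOn_Ioc_of_le zero_le_one] at h1
    exact h1.const_mul _
  refine h1'.mono' ((w_meas α).aestronglyMeasurable) ?_
  filter_upwards [ae_restrict_mem measurableSet_Ioc] with t ht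
  obtain ⟨ht0, ht1⟩ := ht
  have hb : (0:ℝ) ≤ 1 - t := by linarith
  have hb' : (0:ℝ) ≤ 1 + t := by linarith
  have key : (1 - t ^ 2 : ℝ) = (1 - t) * (1 + t) := by ring
  rw [Real.norm_eq_abs, abs_of_nonneg (by rw [key]; exact Real.rpow_nonneg (by positivity) _),
    key, Real.mul_rpow hb hb']
  have h2 : (1 + t : ℝ) ^ α ≤ (2:ℝ) ^ α + 1 := by
    rcases le_or_gt 0 α with h | h
    · have : (1 + t : ℝ) ^ α ≤ (2:ℝ) ^ α :=
        Real.rpow_le_rpow hb' (by linarith) h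
      linarith
    · have : (1 + t : ℝ) ^ α ≤ 1 :=
        Real.rpow_le_one_of_one_le_of_nonpos (by linarith) h.le
      have h2 : (0:ℝ) < (2:ℝ) ^ α := Real.rpow_pos_of_pos (by norm_num) _
      linarith
  calc (1 - t) ^ α * (1 + t) ^ α ≤ (1 - t) ^ α * ((2:ℝ) ^ α + 1) :=
        mul_le_mul_of_nonneg_left h2 (Real.rpow_nonneg hb _)
    _ = ((2:ℝ) ^ α + 1) * (1 - t) ^ α := by ring

/-- Integrability of a bounded measurable function times the weight. -/
lemma mul_w_intInt {α : ℝ} (hα : -1 < α) {h : ℝ → ℝ}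
    (hm : AEStronglyMeasurable h (volume.restrict (Ioc (0:ℝ) 1)))
    {M : ℝ} (hM : ∀ x ∈ Ioc (0:ℝ) 1, |h x| ≤ M) :
    IntervalIntegrable (fun t : ℝ => h t * (1 - t ^ 2) ^ α) volume 0 1 := by
  rw [intervalIntegrable_iff_integrableOn_Ioc_of_le zero_le_one]
  have hw := w_intInt hα
  rw [intervalIntegrable_iff_integrableOn_Ioc_of_le zero_le_one] at hw
  refine (hw.const_mul M).mono'
    (hm.mul (w_meas α).aestronglyMeasurable.restrict) ?_
  filter_upwards [ae_restrict_mem measurableSet_Ioc] with t ht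
  have hb : (0:ℝ) ≤ 1 - t ^ 2 := by nlinarith [ht.1, ht.2]
  have hw0 : (0:ℝ) ≤ (1 - t ^ 2) ^ α := Real.rpow_nonneg hb _
  rw [Real.norm_eq_abs, abs_mul, abs_of_nonneg hw0]
  exact mul_le_mul_of_nonneg_right (hM t ht) hw0

/-- The basic Beta-type integral. -/
lemma integral_t_mul_w {α : ℝ} (hα : -1 < α) :
    ∫ t in (0:ℝ)..1, t * (1 - t ^ 2) ^ α = 1 / (2 * (α + 1)) := by
  have hα1 : (0:ℝ) < α + 1 := by linarith
  set G : ℝ → ℝ := fun t => -(1 - t ^ 2) ^ (α + 1) / (2 * (α + 1)) with hG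
  have hcont : ContinuousOn G (Icc 0 1) := by
    apply ContinuousOn.div_const
    apply ContinuousOn.neg
    apply ContinuousOn.rpow_const (by fun_prop)
    intro x _
    right; exact hα1.le
  have hderiv : ∀ x ∈ Ioo (0:ℝ) 1, HasDerivWithinAt G (x * (1 - x ^ 2) ^ α) (Ioi x) x := by
    intro x hx
    have hbase : (0:ℝ) < 1 - x ^ 2 := by nlinarith [hx.1, hx.2]
    have h1 : HasDerivAt (fun t : ℝ => 1 - t ^ 2) (-(2 * x)) x := by
      simpa using ((hasDerivAt_pow 2 x).const_sub 1)
    have h2 : HasDerivAt (fun t : ℝ => (1 - t ^ 2) ^ (α + 1))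
        (-(2 * x) * (α + 1) * (1 - x ^ 2) ^ (α + 1 - 1)) x :=
      h1.rpow_const (Or.inl hbase.ne')
    have h3 : HasDerivAt G (x * (1 - x ^ 2) ^ α) x := by
      have := (h2.neg).div_const (2 * (α + 1))
      rw [add_sub_cancel_right] at this
      refine this.congr_deriv ?_
      field_simp
    exact h3.hasDerivWithinAt
  have hint : IntervalIntegrable (fun t : ℝ => t * (1 - t ^ 2) ^ α) volume 0 1 := by
    refine mul_w_intInt hα measurable_id.aestronglyMeasurable.restrict (M := 1) ?_
    intro x hx
    rw [abs_of_nonneg hx.1.le]; exact hx.2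
  have := intervalIntegral.integral_eq_sub_of_hasDeriv_right_of_le zero_le_one hcont hderiv hint
  rw [this, hG]
  simp only
  rw [show (1:ℝ) - 1 ^ 2 = 0 by norm_num, show (1:ℝ) - 0 ^ 2 = 1 by norm_num,
    Real.zero_rpow hα1.ne', Real.one_rpow]
  field_simp
  norm_num

/-- The constant identity. -/
lemma const_identity (d : ℕ) (hd : 2 ≤ d) :
    (2 * sphArea (d - 2) / sphArea (d - 1)) * (1 / (2 * (((d:ℝ) - 3) / 2 + 1))) =
      Real.Gamma ((d : ℝ) / 2) / (Real.sqrt Real.pi * Real.Gamma (((d : ℝ) + 1) / 2)) := by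
  have hd1 : (1:ℕ) ≤ d := by omega
  have hc2 : ((d - 2 : ℕ) : ℝ) = (d : ℝ) - 2 := by
    push_cast [Nat.cast_sub hd]; ring
  have hc1 : ((d - 1 : ℕ) : ℝ) = (d : ℝ) - 1 := by
    push_cast [Nat.cast_sub hd1]; ring
  have hd2 : (2:ℝ) ≤ (d : ℝ) := by exact_mod_cast hd
  rw [sphArea, sphArea, hc2, hc1]
  have hqpos : (0:ℝ) < ((d:ℝ) - 1) / 2 := by linarith
  have e2 : ((d:ℝ) - 2 + 1) / 2 = ((d:ℝ) - 1) / 2 := by ring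
  have e1 : ((d:ℝ) - 1 + 1) / 2 = (d:ℝ) / 2 := by ring
  have hdm1 : ((d:ℝ) - 3) / 2 + 1 = ((d:ℝ) - 1) / 2 := by ring
  have hΓrec : Real.Gamma (((d:ℝ) + 1) / 2)
      = (((d:ℝ) - 1) / 2) * Real.Gamma (((d:ℝ) - 1) / 2) := by
    rw [show ((d:ℝ) + 1) / 2 = ((d:ℝ) - 1) / 2 + 1 by ring, Real.Gamma_add_one hqpos.ne']
  have hπpow : Real.pi ^ ((d:ℝ) / 2)
      = Real.pi ^ (((d:ℝ) - 1) / 2) * Real.sqrt Real.pi := by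
    rw [Real.sqrt_eq_rpow, ← Real.rpow_add Real.pi_pos]; congr 1; ring
  rw [e2, e1, hΓrec, hπpow, hdm1]
  have hΓa : (0:ℝ) < Real.Gamma (((d:ℝ) - 1) / 2) := Real.Gamma_pos_of_pos hqpos
  have hΓb : (0:ℝ) < Real.Gamma ((d:ℝ) / 2) := Real.Gamma_pos_of_pos (by linarith)
  have hsπ : (0:ℝ) < Real.sqrt Real.pi := Real.sqrt_pos.mpr Real.pi_pos
  have hppos : (0:ℝ) < Real.pi ^ (((d:ℝ) - 1) / 2) := Real.rpow_pos_of_pos Real.pi_pos _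
  generalize hQ : ((d:ℝ) - 1) / 2 = q at *
  generalize hP : Real.pi ^ q = P at *
  generalize hA : Real.Gamma q = A at *
  generalize hB : Real.Gamma ((d:ℝ) / 2) = B at *
  field_simp

end Aux

set_option maxHeartbeats 1000000 in
theorem stmt_14 (d : ℕ) (hd : 2 ≤ d) (u : ℝ → ℝ) (hcont : Continuous u)
    (heven : ∀ x, u (-x) = u x) (hnonneg : ∀ x, 0 ≤ u x)
    (hsupp : HasCompactSupport u) (hint : ∫ x, u x = 1) :
    (∃ C R : ℝ, ∀ s : ℝ, R ≤ |s| →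
      abs (RL d (fun x => ∫ y, |x - y| * u y) s
        - Real.Gamma ((d : ℝ) / 2) / (Real.sqrt Real.pi * Real.Gamma (((d : ℝ) + 1) / 2)) * |s|)
        ≤ C / |s|) ∧
    Continuous (fun s => RL d (fun x => ∫ y, |x - y| * u y) s
        - Real.Gamma ((d : ℝ) / 2) / (Real.sqrt Real.pi * Real.Gamma (((d : ℝ) + 1) / 2)) * |s|) ∧
    Tendsto (fun s => RL d (fun x => ∫ y, |x - y| * u y) s
        - Real.Gamma ((d : ℝ) / 2) / (Real.sqrt Real.pi * Real.Gamma (((d : ℝ) + 1) / 2)) * |s|)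
      (cocompact ℝ) (nhds 0) ∧
    MeasureTheory.MemLp (fun s => RL d (fun x => ∫ y, |x - y| * u y) s
        - Real.Gamma ((d : ℝ) / 2) / (Real.sqrt Real.pi * Real.Gamma (((d : ℝ) + 1) / 2)) * |s|)
      2 MeasureTheory.volume := by
  classical
  set α : ℝ := ((d:ℝ) - 3) / 2 with hαdef
  have hd2 : (2:ℝ) ≤ (d:ℝ) := by exact_mod_cast hd
  have hα : -1 < α := by rw [hαdef]; linarith
  set c : ℝ := 2 * sphArea (d - 2) / sphArea (d - 1) with hcdef
  set Cd : ℝ := Real.Gamma ((d : ℝ) / 2) /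
      (Real.sqrt Real.pi * Real.Gamma (((d : ℝ) + 1) / 2)) with hCd
  -- support radius
  obtain ⟨r₀, hr₀⟩ := (hsupp.isBounded).subset_closedBall 0
  set R₀ : ℝ := max r₀ 1 with hR₀def
  have hR₀1 : (1:ℝ) ≤ R₀ := le_max_right _ _
  have hR₀pos : (0:ℝ) < R₀ := lt_of_lt_of_le one_pos hR₀1
  have hu_supp : ∀ y : ℝ, u y ≠ 0 → |y| ≤ R₀ := by
    intro y hy
    have : y ∈ tsupport u := subset_tsupport u hy
    have := hr₀ this
    rw [Metric.mem_closedBall, Real.dist_eq, sub_zero] at this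
    exact this.trans (le_max_left _ _)
  -- the perturbation g
  set g : ℝ → ℝ := fun x => ∫ y, (|x - y| - |x|) * u y with hgdef
  -- integrability facts
  have hint1 : ∀ x : ℝ, Integrable (fun y => |x - y| * u y) := by
    intro x
    refine Continuous.integrable_of_hasCompactSupport ?_ (hsupp.mul_left)
    exact ((continuous_const.sub continuous_id).abs).mul hcont
  have hint2 : ∀ x : ℝ, Integrable (fun y => (|x - y| - |x|) * u y) := by
    intro x
    refine Continuous.integrable_of_hasCompactSupport ?_ (hsupp.mul_left)
    exact (((continuous_const.sub continuous_id).abs).sub continuous_const).mul hcont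
  have hint3 : ∀ x : ℝ, Integrable (fun y => |x| * u y) := fun x =>
    (hcont.integrable_of_hasCompactSupport hsupp).const_mul _
  -- decomposition f = |·| + g
  have feq : ∀ x : ℝ, (∫ y, |x - y| * u y) = |x| + g x := by
    intro x
    have : (fun y => (|x - y| - |x|) * u y)
        = fun y => |x - y| * u y - |x| * u y := by funext y; ring
    simp only [hgdef, this]
    rw [integral_sub (hint1 x) (hint3 x), integral_const_mul, hint]
    ring
  -- odd moment vanishes
  have hodd : (∫ y, y * u y) = 0 := by
    have h1 : (∫ y, -y * u (-y)) = ∫ y, y * u y :=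
      integral_neg_eq_self (fun y => y * u y) volume
    have h2 : (fun y => -y * u (-y)) = fun y => -(y * u y) := by
      funext y; rw [heven]; ring
    rw [h2, integral_neg] at h1
    linarith
  -- g vanishes for |x| ≥ R₀
  have gsupp : ∀ x : ℝ, R₀ ≤ |x| → g x = 0 := by
    intro x hx
    rcases le_or_gt 0 x with hx0 | hx0
    · have hxR : R₀ ≤ x := by rwa [abs_of_nonneg hx0] at hx
      have : (fun y => (|x - y| - |x|) * u y) = fun y => -(y * u y) := by
        funext y
        by_cases hy : u y = 0
        · simp [hy]
        · have h := hu_supp y hy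
          have h1 : 0 ≤ x - y := by
            have := abs_le.mp h
            linarith
          rw [abs_of_nonneg h1, abs_of_nonneg hx0]
          ring
      simp only [hgdef, this, integral_neg, hodd, neg_zero]
    · have hxR : x ≤ -R₀ := by
        rw [abs_of_neg hx0] at hx; linarith
      have : (fun y => (|x - y| - |x|) * u y) = fun y => y * u y := by
        funext y
        by_cases hy : u y = 0
        · simp [hy]
        · have h := hu_supp y hy
          have h1 : x - y ≤ 0 := by
            have := abs_le.mp h
            linarith
          rw [abs_of_nonpos h1, abs_of_nonpos hx0.le]
          ring
      simp only [hgdef, this, hodd]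
  -- continuity of g
  have hbound_int : Integrable (fun y => |y| * u y) :=
    Continuous.integrable_of_hasCompactSupport (continuous_abs.mul hcont) hsupp.mul_left
  have gcont : Continuous g := by
    simp only [hgdef]
    refine continuous_of_dominated (F := fun x y => (|x - y| - |x|) * u y)
      (bound := fun y => |y| * u y) (fun x => ((hint2 x).aestronglyMeasurable)) ?_ hbound_int ?_
    · intro x
      filter_upwards with y
      rw [Real.norm_eq_abs, abs_mul, abs_of_nonneg (hnonneg y)]
      refine mul_le_mul_of_nonneg_right ?_ (hnonneg y)
      calc |(|x - y| - |x|)| ≤ |x - y - x| := abs_abs_sub_abs_le_abs_sub _ _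
        _ = |y| := by rw [show x - y - x = -y by ring, abs_neg]
    · filter_upwards with y
      exact (((continuous_id.sub continuous_const).abs).sub continuous_abs).mul continuous_const
  have hgK : HasCompactSupport g := by
    refine HasCompactSupport.intro (isCompact_Icc (a := -R₀) (b := R₀)) ?_
    intro x hx
    refine gsupp x ?_
    rcases lt_or_ge x (-R₀) with h | h
    · rw [abs_of_neg (by linarith)]; linarith
    · have : R₀ < x := by
        rcases lt_or_ge R₀ x with h' | h'
        · exact h'
        · exact absurd ⟨h, h'⟩ hx
      rw [abs_of_pos (by linarith)]; linarith
  obtain ⟨Mg, hMg⟩ := gcont.bounded_above_of_compact_support hgK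
  have hMg0 : 0 ≤ Mg := le_trans (norm_nonneg _) (hMg 0)
  simp only [Real.norm_eq_abs] at hMg
  -- interval integrabilities
  have habs_int : ∀ s : ℝ, IntervalIntegrable (fun t => |t * s| * (1 - t ^ 2) ^ α) volume 0 1 := by
    intro s
    refine mul_w_intInt hα ((continuous_abs.comp (continuous_id.mul continuous_const)).aestronglyMeasurable.restrict) (M := |s|) ?_
    intro x hx
    rw [abs_abs, abs_mul]
    calc |x| * |s| ≤ 1 * |s| :=
      mul_le_mul_of_nonneg_right (by rw [abs_of_nonneg hx.1.le]; exact hx.2) (abs_nonneg s)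
      _ = |s| := one_mul _
  have hg_int : ∀ s : ℝ, IntervalIntegrable (fun t => g (t * s) * (1 - t ^ 2) ^ α) volume 0 1 := by
    intro s
    refine mul_w_intInt hα ((gcont.comp (continuous_id.mul continuous_const)).aestronglyMeasurable.restrict) (M := Mg) ?_
    intro x _
    exact hMg _
  -- key decomposition of RL
  have RLdecomp : ∀ s : ℝ, RL d (fun x => ∫ y, |x - y| * u y) s
      = Cd * |s| + c * ∫ t in (0:ℝ)..1, g (t * s) * (1 - t ^ 2) ^ α := by
    intro s
    have h1 : RL d (fun x => ∫ y, |x - y| * u y) s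
        = c * ∫ t in (0:ℝ)..1, (|t * s| + g (t * s)) * (1 - t ^ 2) ^ α := by
      rw [RL, ← hαdef, ← hcdef]
      congr 1
      refine intervalIntegral.integral_congr fun t _ => ?_
      rw [feq (t * s)]
    have h2 : (∫ t in (0:ℝ)..1, (|t * s| + g (t * s)) * (1 - t ^ 2) ^ α)
        = (∫ t in (0:ℝ)..1, |t * s| * (1 - t ^ 2) ^ α)
          + ∫ t in (0:ℝ)..1, g (t * s) * (1 - t ^ 2) ^ α := by
      rw [← intervalIntegral.integral_add (habs_int s) (hg_int s)]
      refine intervalIntegral.integral_congr fun t _ => ?_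
      ring
    have h3 : (∫ t in (0:ℝ)..1, |t * s| * (1 - t ^ 2) ^ α)
        = |s| * ∫ t in (0:ℝ)..1, t * (1 - t ^ 2) ^ α := by
      rw [← intervalIntegral.integral_const_mul]
      refine intervalIntegral.integral_congr fun t ht => ?_
      rw [Set.uIcc_of_le (zero_le_one), Set.mem_Icc] at ht
      rw [abs_mul, abs_of_nonneg ht.1]
      ring
    rw [h1, h2, h3, integral_t_mul_w hα, mul_add]
    congr 1
    rw [hcdef, hCd, hαdef]
    rw [show c * (|s| * (1 / (2 * (((d:ℝ) - 3) / 2 + 1))))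
      = (c * (1 / (2 * (((d:ℝ) - 3) / 2 + 1)))) * |s| by ring, hcdef]
    rw [const_identity d hd]
  -- the difference function
  set h : ℝ → ℝ := fun s => c * ∫ t in (0:ℝ)..1, g (t * s) * (1 - t ^ 2) ^ α with hhdef
  have hdiff : (fun s => RL d (fun x => ∫ y, |x - y| * u y) s - Cd * |s|) = h := by
    funext s; rw [RLdecomp s]; simp only [hhdef]; ring
  -- global bound on h
  set W : ℝ := ∫ t in (0:ℝ)..1, Mg * (1 - t ^ 2) ^ α with hWdef
  have hglobal : ∀ s : ℝ, |h s| ≤ |c| * W := by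
    intro s
    simp only [hhdef, abs_mul]
    refine mul_le_mul_of_nonneg_left ?_ (abs_nonneg c)
    rw [hWdef]
    have hWnn : (0:ℝ) ≤ ∫ t in (0:ℝ)..1, Mg * (1 - t ^ 2) ^ α := by
      refine intervalIntegral.integral_nonneg zero_le_one fun t ht => ?_
      have hb : (0:ℝ) ≤ 1 - t ^ 2 := by nlinarith [ht.1, ht.2]
      exact mul_nonneg hMg0 (Real.rpow_nonneg hb _)
    have := intervalIntegral.norm_integral_le_abs_of_norm_le
      (f := fun t => g (t * s) * (1 - t ^ 2) ^ α) (g := fun t => Mg * (1 - t ^ 2) ^ α)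
      (μ := volume) (a := 0) (b := 1) ?_ ((w_intInt hα).const_mul Mg)
    · rw [Real.norm_eq_abs, abs_of_nonneg hWnn] at this
      exact this
    · rw [Set.uIoc_of_le zero_le_one]
      filter_upwards [ae_restrict_mem measurableSet_Ioc] with t ht
      have hb : (0:ℝ) ≤ 1 - t ^ 2 := by nlinarith [ht.1, ht.2]
      have hw0 : (0:ℝ) ≤ (1 - t ^ 2) ^ α := Real.rpow_nonneg hb _
      rw [Real.norm_eq_abs, abs_mul, abs_of_nonneg hw0]
      exact mul_le_mul_of_nonneg_right (hMg _) hw0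
  have hW0 : 0 ≤ W := by
    rw [hWdef]
    refine intervalIntegral.integral_nonneg zero_le_one fun t ht => ?_
    have hb : (0:ℝ) ≤ 1 - t ^ 2 := by nlinarith [ht.1, ht.2]
    exact mul_nonneg hMg0 (Real.rpow_nonneg hb _)
  -- decay bound
  set B₂ : ℝ := (3/4 : ℝ) ^ α + 1 with hB₂def
  have hB₂0 : (0:ℝ) ≤ B₂ := by
    rw [hB₂def]; positivity
  have hwB₂ : ∀ t : ℝ, 0 < t → t ≤ 1/2 → (1 - t ^ 2) ^ α ≤ B₂ := by
    intro t ht0 ht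
    have hb1 : (3/4 : ℝ) ≤ 1 - t ^ 2 := by nlinarith
    have hb2 : (1 - t ^ 2 : ℝ) ≤ 1 := by nlinarith
    rcases le_or_gt 0 α with hα0 | hα0
    · have : (1 - t ^ 2 : ℝ) ^ α ≤ 1 := Real.rpow_le_one (by linarith) hb2 hα0
      have h34 : (0:ℝ) ≤ (3/4 : ℝ) ^ α := Real.rpow_nonneg (by norm_num) _
      rw [hB₂def]; linarith
    · have : (1 - t ^ 2 : ℝ) ^ α ≤ (3/4 : ℝ) ^ α :=
        Real.rpow_le_rpow_of_nonpos (by norm_num) hb1 hα0.le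
      rw [hB₂def]; linarith
  set C : ℝ := |c| * (Mg * B₂ * R₀) with hCdef
  have hC0 : 0 ≤ C := by rw [hCdef]; positivity
  have hdecay : ∀ s : ℝ, 2 * R₀ ≤ |s| → |h s| ≤ C / |s| := by
    intro s hs
    have hspos : (0:ℝ) < |s| := by linarith
    set r : ℝ := R₀ / |s| with hrdef
    have hr0 : 0 < r := div_pos hR₀pos hspos
    have hrhalf : r ≤ 1/2 := by
      rw [hrdef, div_le_iff₀ hspos]; linarith
    have hr1 : r ≤ 1 := by linarith
    -- split the integral
    have hI1 : IntervalIntegrable (fun t => g (t * s) * (1 - t ^ 2) ^ α) volume 0 r :=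
      (hg_int s).mono_set (by
        rw [Set.uIcc_of_le hr0.le, Set.uIcc_of_le zero_le_one]
        exact Set.Icc_subset_Icc le_rfl hr1)
    have hI2 : IntervalIntegrable (fun t => g (t * s) * (1 - t ^ 2) ^ α) volume r 1 :=
      (hg_int s).mono_set (by
        rw [Set.uIcc_of_le hr1, Set.uIcc_of_le zero_le_one]
        exact Set.Icc_subset_Icc hr0.le le_rfl)
    have hsplit : (∫ t in (0:ℝ)..1, g (t * s) * (1 - t ^ 2) ^ α)
        = (∫ t in (0:ℝ)..r, g (t * s) * (1 - t ^ 2) ^ α)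
          + ∫ t in r..1, g (t * s) * (1 - t ^ 2) ^ α :=
      (intervalIntegral.integral_add_adjacent_intervals hI1 hI2).symm
    have htail : (∫ t in r..1, g (t * s) * (1 - t ^ 2) ^ α) = 0 := by
      have : ∀ t ∈ Set.uIcc r 1, g (t * s) * (1 - t ^ 2) ^ α = 0 := by
        intro t ht
        rw [Set.uIcc_of_le hr1, Set.mem_Icc] at ht
        have hts : R₀ ≤ |t * s| := by
          rw [abs_mul]
          have h1 : r ≤ |t| := by
            rw [abs_of_nonneg (le_trans hr0.le ht.1)]; exact ht.1
          calc R₀ = r * |s| := by rw [hrdef]; field_simp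
            _ ≤ |t| * |s| := mul_le_mul_of_nonneg_right h1 (abs_nonneg s)
        rw [gsupp _ hts, zero_mul]
      calc (∫ t in r..1, g (t * s) * (1 - t ^ 2) ^ α)
          = ∫ t in r..1, (0:ℝ) := intervalIntegral.integral_congr this
        _ = 0 := intervalIntegral.integral_zero
    have hhead : ‖∫ t in (0:ℝ)..r, g (t * s) * (1 - t ^ 2) ^ α‖ ≤ Mg * B₂ * |r - 0| := by
      refine intervalIntegral.norm_integral_le_of_norm_le_const fun t ht => ?_
      rw [Set.uIoc_of_le hr0.le, Set.mem_Ioc] at ht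
      have ht12 : t ≤ 1/2 := le_trans ht.2 hrhalf
      have hb : (0:ℝ) ≤ 1 - t ^ 2 := by nlinarith [ht.1]
      rw [Real.norm_eq_abs, abs_mul, abs_of_nonneg (Real.rpow_nonneg hb _)]
      exact mul_le_mul (hMg _) (hwB₂ t ht.1 ht12) (Real.rpow_nonneg hb _) hMg0
    simp only [hhdef, abs_mul]
    rw [hsplit, htail, add_zero]
    calc |c| * |∫ t in (0:ℝ)..r, g (t * s) * (1 - t ^ 2) ^ α|
        ≤ |c| * (Mg * B₂ * |r - 0|) := by
          refine mul_le_mul_of_nonneg_left ?_ (abs_nonneg c)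
          simpa [Real.norm_eq_abs] using hhead
      _ = C / |s| := by
          rw [sub_zero, abs_of_pos hr0, hrdef, hCdef]
          field_simp
  -- continuity of h
  have hcont_h : Continuous h := by
    simp only [hhdef]
    refine Continuous.mul continuous_const ?_
    refine intervalIntegral.continuous_of_dominated_interval
      (F := fun s t => g (t * s) * (1 - t ^ 2) ^ α) (bound := fun t => Mg * (1 - t ^ 2) ^ α)
      ?_ ?_ ((w_intInt hα).const_mul Mg) ?_
    · intro s
      exact ((gcont.comp (continuous_id.mul continuous_const)).aestronglyMeasurable.mul
        (w_meas α).aestronglyMeasurable).restrict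
    · intro s
      filter_upwards with t ht
      rw [Set.uIoc_of_le zero_le_one, Set.mem_Ioc] at ht
      have hb : (0:ℝ) ≤ 1 - t ^ 2 := by nlinarith [ht.1, ht.2]
      have hw0 : (0:ℝ) ≤ (1 - t ^ 2) ^ α := Real.rpow_nonneg hb _
      rw [Real.norm_eq_abs, abs_mul, abs_of_nonneg hw0]
      exact mul_le_mul_of_nonneg_right (hMg _) hw0
    · filter_upwards with t _
      exact (gcont.comp (continuous_const.mul continuous_id)).mul continuous_const
  -- tendsto 0 at cocompact
  have htendsto : Tendsto h (cocompact ℝ) (nhds 0) := by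
    rw [cocompact_eq_atBot_atTop, tendsto_sup]
    constructor
    · refine squeeze_zero_norm' (f := h) (a := fun s => C / |s|) ?_ ?_
      · filter_upwards [eventually_le_atBot (-(2 * R₀))] with s hs
        have : 2 * R₀ ≤ |s| := by
          rw [abs_of_nonpos (by linarith)]; linarith
        simpa [Real.norm_eq_abs] using hdecay s this
      · have h1 : Tendsto (fun s : ℝ => |s|) atBot atTop := tendsto_abs_atBot_atTop
        exact Tendsto.div_atTop tendsto_const_nhds h1
    · refine squeeze_zero_norm' (f := h) (a := fun s => C / |s|) ?_ ?_
      · filter_upwards [eventually_ge_atTop (2 * R₀)] with s hs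
        have : 2 * R₀ ≤ |s| := le_trans hs (le_abs_self s)
        simpa [Real.norm_eq_abs] using hdecay s this
      · have h1 : Tendsto (fun s : ℝ => |s|) atTop atTop := tendsto_abs_atTop_atTop
        exact Tendsto.div_atTop tendsto_const_nhds h1
  -- Memℒp
  have hmem : MemLp h 2 volume := by
    rw [memLp_two_iff_integrable_sq hcont_h.aestronglyMeasurable]
    set K : ℝ := (|c| * W) ^ 2 * (1 + (2 * R₀) ^ 2) + 2 * C ^ 2 with hKdef
    have hK0 : 0 ≤ K := by rw [hKdef]; positivity
    refine Integrable.mono' (g := fun s => K * (1 + s ^ 2)⁻¹)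
      (integrable_inv_one_add_sq.const_mul K)
      (hcont_h.pow 2).aestronglyMeasurable ?_
    filter_upwards with s
    have hs2 : (0:ℝ) < 1 + s ^ 2 := by positivity
    rw [Real.norm_eq_abs, abs_pow, sq_abs]
    rcases le_or_gt (2 * R₀) |s| with hbig | hsmall
    · have h1 := hdecay s hbig
      have hspos : (0:ℝ) < |s| := by linarith
      have h2 : h s ^ 2 ≤ (C / |s|) ^ 2 := by
        rw [← sq_abs]
        exact pow_le_pow_left₀ (abs_nonneg _) h1 2
      have h3 : (C / |s|) ^ 2 = C ^ 2 / s ^ 2 := by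
        rw [div_pow, sq_abs]
      have hs1 : (1:ℝ) ≤ s ^ 2 := by nlinarith [sq_abs s, abs_nonneg s, hR₀1, hR₀pos]
      have h4 : C ^ 2 / s ^ 2 ≤ K * (1 + s ^ 2)⁻¹ := by
        rw [div_le_iff₀ (by nlinarith : (0:ℝ) < s ^ 2), mul_assoc]
        have : (1 + s ^ 2)⁻¹ * s ^ 2 = s ^ 2 / (1 + s ^ 2) := by ring
        have key : C ^ 2 * (1 + s ^ 2) ≤ K * s ^ 2 := by
          have : 1 + s ^ 2 ≤ 2 * s ^ 2 := by nlinarith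
          calc C ^ 2 * (1 + s ^ 2) ≤ C ^ 2 * (2 * s ^ 2) :=
            mul_le_mul_of_nonneg_left this (by positivity)
            _ = 2 * C ^ 2 * s ^ 2 := by ring
            _ ≤ K * s ^ 2 := by
              refine mul_le_mul_of_nonneg_right ?_ (by positivity)
              rw [hKdef]; nlinarith [sq_nonneg (|c| * W), sq_nonneg (2 * R₀)]
        calc C ^ 2 = C ^ 2 * (1 + s ^ 2) * (1 + s ^ 2)⁻¹ := by field_simp
          _ ≤ K * s ^ 2 * (1 + s ^ 2)⁻¹ := by
            exact mul_le_mul_of_nonneg_right key (by positivity)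
          _ = K * ((1 + s ^ 2)⁻¹ * s ^ 2) := by ring
      calc h s ^ 2 ≤ C ^ 2 / s ^ 2 := h3 ▸ h2
        _ ≤ K * (1 + s ^ 2)⁻¹ := h4
    · have h1 := hglobal s
      have h2 : h s ^ 2 ≤ (|c| * W) ^ 2 := by
        rw [← sq_abs]
        exact pow_le_pow_left₀ (abs_nonneg _) h1 2
      have h3 : (|c| * W) ^ 2 ≤ K * (1 + s ^ 2)⁻¹ := by
        rw [hKdef, le_mul_inv_iff₀ hs2]
        have hss : s ^ 2 ≤ (2 * R₀) ^ 2 := by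
          rw [← sq_abs]
          exact pow_le_pow_left₀ (abs_nonneg _) hsmall.le 2
        nlinarith [sq_nonneg C, sq_nonneg (|c| * W)]
      linarith
  -- assemble
  have hpt : ∀ s : ℝ, RL d (fun x => ∫ y, |x - y| * u y) s - Cd * |s| = h s :=
    fun s => congrFun hdiff s
  refine ⟨⟨C, 2 * R₀, fun s hs => ?_⟩, ?_, ?_, ?_⟩
  · rw [hpt s]
    exact hdecay s hs
  · rw [hdiff]; exact hcont_h
  · rw [hdiff]; exact htendsto
  · rw [hdiff]; exact hmem
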